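/- arXiv:2501.16198 — 2 statements merged into one kernel-verified Lean document; each statement's English description precedes it below -/
import Mathlib

section
/- Let K be a field, S = K[x₁,…,xₙ], and let f ∈ S be a square-free supported polynomial. If f = f₁ ⋯ f_t is a factorization of f with every factor f_i irreducible in S, then for all indices i ≠ j the sets of variables vars(f_i) and vars(f_j) are disjoint, i.e., no variable x_k divides both a monomial in the support of f_i and a monomial in the support of f_j. -/
open MvPolynomial

private lemma degreeOf_mul_eq_aux {K : Type*} [Field K] {m : ℕ}
    (p q : MvPolynomial (Fin (m + 1)) K) (hp : p ≠ 0) (hq : q ≠ 0) :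
    (p * q).degreeOf 0 = p.degreeOf 0 + q.degreeOf 0 := by
  have hp' : finSuccEquiv K m p ≠ 0 := by simpa using hp
  have hq' : finSuccEquiv K m q ≠ 0 := by simpa using hq
  have := Polynomial.natDegree_mul hp' hq'
  rw [← map_mul] at this
  rw [← natDegree_finSuccEquiv, ← natDegree_finSuccEquiv p, ← natDegree_finSuccEquiv q, this]

private lemma degreeOf_mul_eq' {K : Type*} [Field K] {n : ℕ} (k : Fin n)
    (p q : MvPolynomial (Fin n) K) (hp : p ≠ 0) (hq : q ≠ 0) :
    (p * q).degreeOf k = p.degreeOf k + q.degreeOf k := by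
  obtain ⟨m, rfl⟩ : ∃ m, n = m + 1 := ⟨n - 1, by have := k.pos; omega⟩
  let e : Fin (m + 1) ≃ Fin (m + 1) := Equiv.swap k 0
  have hinj : Function.Injective (e : Fin (m+1) → Fin (m+1)) := e.injective
  have hek : e k = 0 := Equiv.swap_apply_left k 0
  have hren : ∀ r : MvPolynomial (Fin (m+1)) K, r.degreeOf k = (rename e r).degreeOf 0 := by
    intro r
    rw [← hek, degreeOf_rename_of_injective hinj]
  have hrp : rename e p ≠ 0 := by
    simpa using (rename_injective _ hinj).ne_iff' (map_zero _) |>.mpr hp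
  have hrq : rename e q ≠ 0 := by
    simpa using (rename_injective _ hinj).ne_iff' (map_zero _) |>.mpr hq
  rw [hren, hren, hren, map_mul]
  exact degreeOf_mul_eq_aux _ _ hrp hrq

private lemma one_le_degreeOf_of_mem_vars {K : Type*} [Field K] {n : ℕ}
    {p : MvPolynomial (Fin n) K} {k : Fin n} (h : k ∈ p.vars) : 1 ≤ p.degreeOf k := by
  obtain ⟨d, hd, hk⟩ := (mem_vars k).mp h
  have : d k ≠ 0 := Finsupp.mem_support_iff.mp hk
  calc 1 ≤ d k := by omega
    _ ≤ p.degreeOf k := by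
        rw [degreeOf_eq_sup]; exact Finset.le_sup (f := fun d => d k) hd

/-- A multivariate polynomial is *square-free supported* if every monomial in its support
is square-free, i.e. every variable occurs with exponent at most `1`. -/
def SquarefreeSupported {R : Type*} [CommSemiring R] {n : ℕ}
    (f : MvPolynomial (Fin n) R) : Prop :=
  ∀ m ∈ f.support, ∀ i : Fin n, m i ≤ 1

/-- If `f` is square-free supported and `f = f₁ ⋯ f_t` with each `fᵢ`
irreducible, then the irreducible factors have pairwise disjoint sets of variables. -/
theorem vars_disjoint_of_irreducible_factors {K : Type*} [Field K] {n t : ℕ}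
    (f : MvPolynomial (Fin n) K) (hf : SquarefreeSupported f)
    (fs : Fin t → MvPolynomial (Fin n) K) (hprod : f = ∏ i, fs i)
    (hirr : ∀ i, Irreducible (fs i)) :
    ∀ i j : Fin t, i ≠ j → Disjoint (fs i).vars (fs j).vars := by
  intro i j hij
  rw [Finset.disjoint_left]
  intro k hki hkj
  -- degreeOf k f ≤ 1
  have hdegf : f.degreeOf k ≤ 1 := by
    rw [degreeOf_eq_sup]
    exact Finset.sup_le fun d hd => hf d hd k
  -- each factor nonzero
  have hne : ∀ l, fs l ≠ 0 := fun l => (hirr l).ne_zero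
  -- rewrite the product
  have hsplit : f = fs i * (fs j * ∏ l ∈ (Finset.univ.erase i).erase j, fs l) := by
    rw [hprod, ← Finset.mul_prod_erase Finset.univ fs (Finset.mem_univ i),
      ← Finset.mul_prod_erase _ fs (Finset.mem_erase.mpr ⟨Ne.symm hij, Finset.mem_univ j⟩)]
  have hrest : (∏ l ∈ (Finset.univ.erase i).erase j, fs l) ≠ 0 :=
    Finset.prod_ne_zero_iff.mpr fun l _ => hne l
  have h1 : (fs j * ∏ l ∈ (Finset.univ.erase i).erase j, fs l) ≠ 0 :=
    mul_ne_zero (hne j) hrest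
  have hd1 : f.degreeOf k =
      (fs i).degreeOf k + (fs j * ∏ l ∈ (Finset.univ.erase i).erase j, fs l).degreeOf k := by
    rw [hsplit]; exact degreeOf_mul_eq' k _ _ (hne i) h1
  have hd2 : (fs j * ∏ l ∈ (Finset.univ.erase i).erase j, fs l).degreeOf k =
      (fs j).degreeOf k + (∏ l ∈ (Finset.univ.erase i).erase j, fs l).degreeOf k :=
    degreeOf_mul_eq' k _ _ (hne j) hrest
  have hi1 := one_le_degreeOf_of_mem_vars hki
  have hj1 := one_le_degreeOf_of_mem_vars hkj
  omega
end

section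
/- Let K be a field and S = K[x₁,…,xₙ]. Every nonzero square-free supported polynomial f ∈ S is a squarefree element of S, i.e., whenever g² divides f for some g ∈ S, the element g is a unit. -/
open MvPolynomial

private lemma degreeOf_zero_mul_aux {K : Type*} [Field K] {n : ℕ}
    (p q : MvPolynomial (Fin (n + 1)) K) (hp : p ≠ 0) (hq : q ≠ 0) :
    MvPolynomial.degreeOf 0 (p * q) =
      MvPolynomial.degreeOf 0 p + MvPolynomial.degreeOf 0 q := by
  have hp' : finSuccEquiv K n p ≠ 0 := by
    simpa using (map_ne_zero_iff _ (finSuccEquiv K n).injective).mpr hp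
  have hq' : finSuccEquiv K n q ≠ 0 := by
    simpa using (map_ne_zero_iff _ (finSuccEquiv K n).injective).mpr hq
  rw [← natDegree_finSuccEquiv, ← natDegree_finSuccEquiv, ← natDegree_finSuccEquiv,
    map_mul, Polynomial.natDegree_mul hp' hq']

private lemma degreeOf_mul_aux {K : Type*} [Field K] {n : ℕ} (i : Fin n)
    (p q : MvPolynomial (Fin n) K) (hp : p ≠ 0) (hq : q ≠ 0) :
    MvPolynomial.degreeOf i (p * q) =
      MvPolynomial.degreeOf i p + MvPolynomial.degreeOf i q := by
  cases n with
  | zero => exact i.elim0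
  | succ m =>
    set e : Fin (m + 1) ≃ Fin (m + 1) := Equiv.swap 0 i with he
    have hinj : Function.Injective e := e.injective
    have key : ∀ r : MvPolynomial (Fin (m + 1)) K,
        MvPolynomial.degreeOf i r = MvPolynomial.degreeOf 0 (rename e r) := by
      intro r
      have := MvPolynomial.degreeOf_rename_of_injective (p := r) hinj i
      rw [show e i = 0 from Equiv.swap_apply_right 0 i] at this
      exact this.symm
    have hrp : rename e p ≠ 0 := by
      simpa using (map_ne_zero_iff _ (MvPolynomial.renameEquiv K e).injective).mpr hp
    have hrq : rename e q ≠ 0 := by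
      simpa using (map_ne_zero_iff _ (MvPolynomial.renameEquiv K e).injective).mpr hq
    rw [key, key, key, map_mul]
    exact degreeOf_zero_mul_aux _ _ hrp hrq

/-- Every nonzero square-free supported polynomial is a squarefree element
of `K[x₁,…,xₙ]`. -/
theorem squarefree_of_squarefreeSupported {K : Type*} [Field K] {n : ℕ}
    (f : MvPolynomial (Fin n) K) (hf : f ≠ 0) (hsq : SquarefreeSupported f) :
    Squarefree f := by
  rintro g ⟨h, hfh⟩
  have hg : g ≠ 0 := by rintro rfl; simp at hfh; exact hf hfh
  have hh : h ≠ 0 := by rintro rfl; simp at hfh; exact hf hfh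
  have hdeg : ∀ i : Fin n, MvPolynomial.degreeOf i g = 0 := by
    intro i
    have h1 : MvPolynomial.degreeOf i f ≤ 1 :=
      MvPolynomial.degreeOf_le_iff.mpr fun m hm => hsq m hm i
    have hgg : g * g ≠ 0 := mul_ne_zero hg hg
    have h2 : MvPolynomial.degreeOf i f =
        (MvPolynomial.degreeOf i g + MvPolynomial.degreeOf i g) +
          MvPolynomial.degreeOf i h := by
      rw [hfh, degreeOf_mul_aux i _ _ hgg hh, degreeOf_mul_aux i _ _ hg hg]
    omega
  have hconst : g = MvPolynomial.C (MvPolynomial.coeff 0 g) := by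
    have hsupp : ∀ m ∈ g.support, m = 0 := by
      intro m hm
      ext i
      exact Nat.le_zero.mp <| (MvPolynomial.degreeOf_le_iff.mp (hdeg i).le) m hm
    ext m
    rcases eq_or_ne m 0 with rfl | hm
    · simp
    · rw [MvPolynomial.coeff_C, if_neg (Ne.symm hm)]
      by_contra hc
      exact hm (hsupp m (MvPolynomial.mem_support_iff.mpr hc))
  have hc0 : MvPolynomial.coeff 0 g ≠ 0 := by
    intro h0
    exact hg (by rw [hconst, h0, map_zero])
  rw [hconst]
  exact (isUnit_iff_ne_zero.mpr hc0).map MvPolynomial.C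
end
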